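/- Let G be a bipartite multigraph whose edge set is the disjoint union of two matchings A and B. Suppose that no connected component of G is a single B-edge (a path of length 1 with its unique edge in B), and no component is a path of length 3 whose two end edges are in B (i.e., pattern B–A–B). Then |A| ≥ (2/3)·|B|. -/

import Mathlib

open SimpleGraph

/-- a graph in which every vertex has at most one neighbour, i.e. whose edge set
is a matching -/
def GraphMatching {V : Type} (A : SimpleGraph V) : Prop :=
  ∀ ⦃u v w⦄, A.Adj u v → A.Adj u w → v = w

lemma dartSet_ncard {V : Type} [Fintype V] (G : SimpleGraph V) :
    {p : V × V | G.Adj p.1 p.2}.ncard = 2 * G.edgeSet.ncard := by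
  classical
  have e : {p : V × V | G.Adj p.1 p.2} ≃ G.Dart :=
    { toFun := fun p => ⟨p.1, p.2⟩
      invFun := fun d => ⟨d.toProd, d.adj⟩
      left_inv := fun p => rfl
      right_inv := fun d => rfl }
  have h1 : {p : V × V | G.Adj p.1 p.2}.ncard = Fintype.card G.Dart := by
    rw [Set.ncard_eq_toFinset_card', Set.toFinset_card]
    exact Fintype.card_congr e
  rw [h1, G.dart_card_eq_twice_card_edges, Set.ncard_eq_toFinset_card']
  unfold SimpleGraph.edgeFinset
  congr!

/-- Let `G = A ⊔ B` be a bipartite graph whose edge set is the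
disjoint union of two matchings `A` and `B`.  If no component of `G` is a single
`B`-edge (expressed: every `B`-edge has an `A`-edge at one of its endpoints) and
no component is a `B–A–B` path of length 3 (expressed: every such `B–A–B`
pattern extends by an `A`-edge at one of its ends), then `|A| ≥ (2/3)·|B|`,
i.e. `2·|B| ≤ 3·|A|`. -/
theorem stmt10 {V : Type} [Fintype V] (A B : SimpleGraph V)
    (hbip : ∃ f : V → Bool, ∀ u v, (A ⊔ B).Adj u v → f u ≠ f v)
    (hA : GraphMatching A) (hB : GraphMatching B)
    (hdisj : ∀ u v, ¬ (A.Adj u v ∧ B.Adj u v))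
    (h1 : ∀ u v, B.Adj u v → (∃ w, A.Adj u w) ∨ (∃ w, A.Adj v w))
    (h3 : ∀ a b c d, B.Adj a b → A.Adj b c → B.Adj c d →
      (∃ w, A.Adj a w) ∨ (∃ w, A.Adj d w)) :
    2 * B.edgeSet.ncard ≤ 3 * A.edgeSet.ncard := by
  classical
  set QB : Set (V × V) := {p | B.Adj p.1 p.2} with hQBdef
  set QA : Set (V × V) := {p | A.Adj p.1 p.2} with hQAdef
  set Q1 : Set (V × V) := {p | B.Adj p.1 p.2 ∧ ∃ w, A.Adj p.1 w} with hQ1def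
  set Q2 : Set (V × V) := {p | B.Adj p.1 p.2 ∧ ¬ ∃ w, A.Adj p.1 w} with hQ2def
  -- the chosen A-neighbour
  let nb : V → V := fun v => if h : ∃ w, A.Adj v w then h.choose else v
  have hnb : ∀ {v : V}, (∃ w, A.Adj v w) → A.Adj v (nb v) := by
    intro v h
    simp only [nb, dif_pos h]
    exact h.choose_spec
  -- covered darts inject into darts of A
  have hc1 : Q1.ncard ≤ QA.ncard := by
    apply Set.ncard_le_ncard_of_injOn (fun p => (p.1, nb p.1))
    · rintro ⟨u, v⟩ ⟨hadj, hcov⟩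
      exact hnb hcov
    · rintro ⟨u, v⟩ ⟨hadj, hcov⟩ ⟨u', v'⟩ ⟨hadj', hcov'⟩ heq
      have hu : u = u' := congrArg Prod.fst heq
      subst hu
      have : v = v' := hB hadj hadj'
      simp [this]
  -- uncovered darts inject into edges of A
  have hc2 : Q2.ncard ≤ A.edgeSet.ncard := by
    apply Set.ncard_le_ncard_of_injOn (fun p => s(p.2, nb p.2))
    · rintro ⟨u, v⟩ ⟨hadj, hcov⟩
      have hv : ∃ w, A.Adj v w := (h1 u v hadj).resolve_left hcov
      exact hnb hv
    · rintro ⟨u, v⟩ ⟨hadj, hcov⟩ ⟨u', v'⟩ ⟨hadj', hcov'⟩ heq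
      have hv : ∃ w, A.Adj v w := (h1 u v hadj).resolve_left hcov
      have hv' : ∃ w, A.Adj v' w := (h1 u' v' hadj').resolve_left hcov'
      have hav := hnb hv
      have hav' := hnb hv'
      rw [Sym2.eq_iff] at heq
      rcases heq with ⟨h11, _⟩ | ⟨h12, h21⟩
      · dsimp only at h11
        subst h11
        have : u = u' := hB hadj.symm hadj'.symm
        simp [this]
      · dsimp only at h12 h21
        have hvv' : A.Adj v v' := h21 ▸ hav
        exact absurd (h3 u v v' u' hadj hvv' hadj'.symm) (by tauto)
  have hsplit : QB = Q1 ∪ Q2 := by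
    ext p
    simp only [hQBdef, hQ1def, hQ2def, Set.mem_setOf_eq, Set.mem_union]
    tauto
  have hQB2 : QB.ncard = 2 * B.edgeSet.ncard := dartSet_ncard B
  have hQA2 : QA.ncard = 2 * A.edgeSet.ncard := dartSet_ncard A
  have hle : QB.ncard ≤ Q1.ncard + Q2.ncard := by
    rw [hsplit]; exact Set.ncard_union_le _ _
  omega
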